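/- Let T be a light tournament, let X = (X_1, …, X_ℓ) be a C₃-chain in T, let C be the set of clear vertices, and let U be the set of vertices outside the chain that are not clear. Let a be a vertex of X_1. Then every vertex w ∈ U with w→a has both an in-neighbor and an out-neighbor among the three vertices of X_1. -/
import Mathlib


/-- A tournament on a vertex type `V`: for every two distinct vertices exactly one
of the two possible arcs is present, and there are no loops. -/
structure Tournament (V : Type) where
  arc : V → V → Prop
  asymm : ∀ u v, arc u v → ¬ arc v u
  total : ∀ u v, u ≠ v → arc u v ∨ arc v u

namespace Tournament

variable {V : Type}

/-- A set of vertices is transitive (acyclic) if it contains no directed triangle. -/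
def IsTransitiveSet (T : Tournament V) (S : Set V) : Prop :=
  ∀ a ∈ S, ∀ b ∈ S, ∀ c ∈ S, ¬ (T.arc a b ∧ T.arc b c ∧ T.arc c a)

/-- Out-neighborhood `N⁺(v)`. -/
def outN (T : Tournament V) (v : V) : Set V := {w | T.arc v w}

/-- In-neighborhood `N⁻(v)`. -/
def inN (T : Tournament V) (v : V) : Set V := {w | T.arc w v}

/-- Arc neighborhood `N(uv)` of an arc `u → v`: vertices forming a directed
triangle with the arc. -/
def arcNbhd (T : Tournament V) (u v : V) : Set V := {w | T.arc v w ∧ T.arc w u}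

/-- `T.ColorableOn S k` means the induced subtournament `T[S]` can be partitioned
into at most `k` transitive sets. -/
def ColorableOn (T : Tournament V) (S : Set V) (k : ℕ) : Prop :=
  ∃ f : V → ℕ, (∀ v ∈ S, f v < k) ∧ ∀ i : ℕ, T.IsTransitiveSet {v | v ∈ S ∧ f v = i}

/-- The dichromatic number of `T`: the least `k` such that `V(T)` can be
partitioned into `k` transitive sets. -/
noncomputable def dichromaticNumber (T : Tournament V) : ℕ :=
  sInf {k | T.ColorableOn Set.univ k}

/-- An arc `u → v` is heavy if `N(uv)` contains a directed triangle. -/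
def IsHeavy (T : Tournament V) (u v : V) : Prop :=
  T.arc u v ∧ ∃ a b c,
    a ∈ T.arcNbhd u v ∧ b ∈ T.arcNbhd u v ∧ c ∈ T.arcNbhd u v ∧
    T.arc a b ∧ T.arc b c ∧ T.arc c a

/-- A tournament is light if it has no heavy arc. -/
def IsLight (T : Tournament V) : Prop := ∀ u v, ¬ T.IsHeavy u v

/-- The induced subtournament `T[S]` is light: for every arc within `S`, the part
of its arc neighborhood inside `S` is transitive. -/
def LightOn (T : Tournament V) (S : Set V) : Prop :=
  ∀ u ∈ S, ∀ v ∈ S, T.arc u v → T.IsTransitiveSet (T.arcNbhd u v ∩ S)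

/-- `S` is the vertex set of a directed triangle. -/
def IsTriangle (T : Tournament V) (S : Set V) : Prop :=
  ∃ a b c, S = {a, b, c} ∧ T.arc a b ∧ T.arc b c ∧ T.arc c a

/-- `S ⇒ U`: every arc between `S` and `U` is directed from `S` to `U`. -/
def Beats (T : Tournament V) (S U : Set V) : Prop :=
  ∀ s ∈ S, ∀ u ∈ U, T.arc s u

/-- `X 0, …, X (L-1)` is a `C₃`-chain of length `L`: pairwise vertex-disjoint
directed triangles with `X i ⇒ X (i+1)`. -/
def IsC3Chain (T : Tournament V) (X : ℕ → Set V) (L : ℕ) : Prop :=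
  (∀ i < L, T.IsTriangle (X i)) ∧
  (∀ i < L, ∀ j < L, i ≠ j → Disjoint (X i) (X j)) ∧
  (∀ i, i + 1 < L → T.Beats (X i) (X (i + 1)))

/-- `v 0, …, v k` are the vertices of a shortest directed path from `v 0` to `v k`:
consecutive arcs are present, and no directed path (walk) from `v 0` to `v k`
has fewer than `k` arcs. -/
def IsShortestPath (T : Tournament V) (v : ℕ → V) (k : ℕ) : Prop :=
  (∀ i < k, T.arc (v i) (v (i + 1))) ∧
  (∀ m : ℕ, ∀ p : ℕ → V, p 0 = v 0 → p m = v k →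
    (∀ i < m, T.arc (p i) (p (i + 1))) → k ≤ m)

/-- The path decomposition `D 0, …, D (k+1)` associated to the path `v 0, …, v k`:
`D 0 = N⁺(v 0)`, `D i = N(e i) \ (D 0 ∪ ⋯ ∪ D (i-1))` for `1 ≤ i ≤ k` where
`e i` is the arc `v (i-1) → v i`, and `D (k+1) = N⁻(v k) \ (D 0 ∪ ⋯ ∪ D k)`. -/
def PathDecomp (T : Tournament V) (v : ℕ → V) (k : ℕ) (D : ℕ → Set V) : Prop :=
  D 0 = T.outN (v 0) ∧
  (∀ i, 1 ≤ i → i ≤ k → D i = T.arcNbhd (v (i - 1)) (v i) \ ⋃ j < i, D j) ∧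
  D (k + 1) = T.inN (v k) \ ⋃ j < k + 1, D j

end Tournament

theorem stmt_15 {V : Type} [Fintype V] (T : Tournament V) (hlight : T.IsLight)
    (L : ℕ) (hL : 1 ≤ L) (X : ℕ → Set V) (hchain : T.IsC3Chain X L)
    (a : V) (ha : a ∈ X 0)
    (w : V) (hwout : ∀ i < L, w ∉ X i)
    (hwnotclear : ¬ (∀ i < L, (∀ x ∈ X i, T.arc w x) ∨ (∀ x ∈ X i, T.arc x w)))
    (hwa : T.arc w a) :
    (∃ x ∈ X 0, T.arc x w) ∧ (∃ x ∈ X 0, T.arc w x) := by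

  obtain ⟨htri, hdisj, hbeats⟩ := hchain
  refine ⟨?_, ⟨a, ha, hwa⟩⟩
  by_contra hno
  push_neg at hno
  -- w beats all of X 0
  have hw0 : ∀ x ∈ X 0, T.arc w x := by
    intro x hx
    rcases T.total w x (by rintro rfl; exact hwout 0 hL hx) with h | h
    · exact h
    · exact absurd h (hno x hx)
  -- there is some i < L with a vertex of X i beating w
  have hex : ∃ i, i < L ∧ ∃ x ∈ X i, T.arc x w := by
    by_contra hc
    push_neg at hc
    apply hwnotclear
    intro i hi
    left
    intro x hx
    rcases T.total w x (by rintro rfl; exact hwout i hi hx) with h | h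
    · exact h
    · exact absurd h (hc i hi x hx)
  classical
  set i0 := Nat.find hex with hi0def
  obtain ⟨hi0L, x, hxX, hxw⟩ := Nat.find_spec hex
  have hmin : ∀ j, j < i0 → ¬ (j < L ∧ ∃ x ∈ X j, T.arc x w) := fun j hj => Nat.find_min hex hj
  -- w beats X j for all j < i0 (with j < L)
  have hwbeats : ∀ j, j < i0 → ∀ x ∈ X j, T.arc w x := by
    intro j hj x hx
    have hjL : j < L := lt_trans hj hi0L
    rcases T.total w x (by rintro rfl; exact hwout j hjL hx) with h | h
    · exact h
    · exact absurd ⟨hjL, x, hx, h⟩ (hmin j hj)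
  have hi0pos : 0 < i0 := by
    rcases Nat.eq_zero_or_pos i0 with h | h
    · exact absurd hxw (T.asymm w x (hw0 x (h ▸ hxX)))
    · exact h
  -- the previous triangle
  have hprevL : i0 - 1 < L := lt_of_le_of_lt (Nat.sub_le _ _) hi0L
  obtain ⟨p, q, r, hpqr, hpq, hqr, hrp⟩ := htri (i0 - 1) hprevL
  have hsucc : i0 - 1 + 1 = i0 := Nat.succ_pred_eq_of_pos hi0pos
  have hbt : T.Beats (X (i0 - 1)) (X i0) := by
    have := hbeats (i0 - 1) (by rw [hsucc]; exact hi0L)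
    rwa [hsucc] at this
  have hmem : ∀ z ∈ X (i0 - 1), z ∈ T.arcNbhd x w := by
    intro z hz
    exact ⟨hwbeats (i0 - 1) (Nat.sub_lt hi0pos one_pos) z hz,
      hbt z hz x hxX⟩
  have hp : p ∈ X (i0 - 1) := by rw [hpqr]; left; rfl
  have hq : q ∈ X (i0 - 1) := by rw [hpqr]; right; left; rfl
  have hr : r ∈ X (i0 - 1) := by rw [hpqr]; right; right; rfl
  exact hlight x w ⟨hxw, p, q, r, hmem p hp, hmem q hq, hmem r hr, hpq, hqr, hrp⟩
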